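/- Let X be a second countable Hausdorff locally compact abelian group, let G be a subgroup of X whose underlying set is Borel measurable, and let μ₁, μ₂ be probability measures on X such that (μ₁ ∗ μ₂)(G) = 1. Then there exists x ∈ X such that (μ₁ ∗ δ_x)(G) = 1 and (μ₂ ∗ δ_{−x})(G) = 1. -/

import Mathlib

open MeasureTheory

noncomputable section

theorem shift_factors_into_borel_subgroup
    {X : Type*} [AddCommGroup X] [TopologicalSpace X] [IsTopologicalAddGroup X]
    [LocallyCompactSpace X] [SecondCountableTopology X] [T2Space X]
    [MeasurableSpace X] [BorelSpace X]
    (G : AddSubgroup X) (hG : MeasurableSet (G : Set X))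
    (μ₁ μ₂ : Measure X) [IsProbabilityMeasure μ₁] [IsProbabilityMeasure μ₂]
    (h : (μ₁.conv μ₂) (G : Set X) = 1) :
    ∃ x : X, (μ₁.conv (Measure.dirac x)) (G : Set X) = 1 ∧
      (μ₂.conv (Measure.dirac (-x))) (G : Set X) = 1 := by
  have hadd : Measurable (fun p : X × X => p.1 + p.2) := by fun_prop
  have hset : MeasurableSet {p : X × X | p.1 + p.2 ∈ (G : Set X)} := hG.preimage hadd
  have hae : ∀ᵐ p ∂(μ₁.prod μ₂), p.1 + p.2 ∈ (G : Set X) := by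
    have hprod : (μ₁.prod μ₂) ((fun p : X × X => p.1 + p.2) ⁻¹' (G : Set X)) = 1 := by
      rwa [Measure.conv, Measure.map_apply hadd hG] at h
    exact MeasureTheory.ae_iff.2 ((MeasureTheory.prob_compl_eq_zero_iff hset).mpr hprod)
  have h1 : ∀ᵐ a ∂μ₁, ∀ᵐ b ∂μ₂, a + b ∈ (G : Set X) :=
    (Measure.ae_prod_iff_ae_ae hset).1 hae
  have h2 : ∀ᵐ b ∂μ₂, ∀ᵐ a ∂μ₁, a + b ∈ (G : Set X) :=
    (Measure.ae_ae_comm hset).1 h1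
  obtain ⟨a, ha⟩ := h1.exists
  obtain ⟨b, hab, hb⟩ := (ha.and h2).exists
  -- convolution with dirac is a translate
  have key : ∀ (μ : Measure X) [SFinite μ] (x : X),
      μ.conv (Measure.dirac x) = μ.map (· + x) := by
    intro μ _ x
    rw [Measure.conv, Measure.prod_dirac, Measure.map_map hadd (by fun_prop)]
    rfl
  have eq1 : ∀ (μ : Measure X) [IsProbabilityMeasure μ] (x : X),
      (∀ᵐ a ∂μ, a + x ∈ (G : Set X)) → (μ.conv (Measure.dirac x)) (G : Set X) = 1 := by
    intro μ _ x hx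
    rw [key μ x, Measure.map_apply (by fun_prop) hG]
    exact (MeasureTheory.prob_compl_eq_zero_iff
      (hG.preimage (by fun_prop))).mp (MeasureTheory.ae_iff.1 hx)
  refine ⟨b, eq1 μ₁ b hb, eq1 μ₂ (-b) ?_⟩
  filter_upwards [ha] with b' hb'
  have h3 : b' + -b = (a + b') - (a + b) := by abel
  rw [h3]
  exact G.sub_mem hb' hab
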